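/- Fix α > 0 and let S₁ = Σ_{k∈ℤ²} [(2k₁ + 1)² + (2k₂)²]^{−2}. As Δ → 0⁺, the ratio of the SPDE-approximated spectral density to the true aliased Matérn spectral density at frequency (1/(2Δ), 0) in dimension 2 with ν = 1 converges to π⁴/(16 S₁): lim_{Δ→0⁺} M̃_Δ((1/(2Δ), 0); 1, 2) / M_Δ((1/(2Δ), 0); 1, 2) = π⁴/(16 S₁). (Numerically this limit is ≈ 2.69.) -/

import Mathlib

open Real Filter

/-- `S₁ = Σ_{k∈ℤ²} [(2k₁ + 1)² + (2k₂)²]^{-2}`. -/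
noncomputable def S1 : ℝ :=
  ∑' k : ℤ × ℤ, 1 / ((2 * (k.1 : ℝ) + 1) ^ 2 + (2 * (k.2 : ℝ)) ^ 2) ^ 2

namespace SpdeAux

/-- `q k = (2k₁+1)² + (2k₂)²`. -/
noncomputable def qk (k : ℤ × ℤ) : ℝ :=
  (2 * (k.1 : ℝ) + 1) ^ 2 + (2 * (k.2 : ℝ)) ^ 2

lemma one_le_qk (k : ℤ × ℤ) : 1 ≤ qk k := by
  have h0 : 2 * k.1 + 1 ≠ 0 := by omega
  have h1 : (1 : ℤ) ≤ (2 * k.1 + 1) ^ 2 := by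
    rcases lt_or_gt_of_ne h0 with h | h <;> nlinarith
  have h1' : (1 : ℝ) ≤ (2 * (k.1 : ℝ) + 1) ^ 2 := by exact_mod_cast h1
  have h2 : (0 : ℝ) ≤ (2 * (k.2 : ℝ)) ^ 2 := sq_nonneg _
  unfold qk; linarith

lemma qk_pos (k : ℤ × ℤ) : 0 < qk k := lt_of_lt_of_le one_pos (one_le_qk k)

lemma summable_f1 : Summable (fun m : ℤ => 1 / (2 * (m : ℝ) + 1) ^ 2) := by
  have h : Summable (fun n : ℤ => 1 / (n : ℝ) ^ 2) :=
    summable_one_div_int_pow.2 one_lt_two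
  have hinj : Function.Injective (fun m : ℤ => 2 * m + 1) := by
    intro a b hab
    simp only [] at hab
    omega
  have := h.comp_injective hinj
  refine this.congr fun m => ?_
  simp only [Function.comp_apply]
  push_cast
  ring

lemma summable_f2 : Summable (fun n : ℤ => 1 / (1 + (2 * (n : ℝ)) ^ 2)) := by
  have h : Summable (fun n : ℤ => 1 / (n : ℝ) ^ 2) :=
    summable_one_div_int_pow.2 one_lt_two
  refine Summable.of_norm_bounded_eventually h ?_
  filter_upwards [Filter.eventually_cofinite_ne (0 : ℤ)] with n hn
  have hn2 : (0 : ℝ) < (n : ℝ) ^ 2 := by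
    have : (n : ℝ) ≠ 0 := Int.cast_ne_zero.2 hn
    positivity
  have hle : (n : ℝ) ^ 2 ≤ 1 + (2 * (n : ℝ)) ^ 2 := by nlinarith
  have hpos : (0 : ℝ) < 1 + (2 * (n : ℝ)) ^ 2 := by positivity
  rw [Real.norm_eq_abs, abs_of_nonneg (by positivity)]
  exact one_div_le_one_div_of_le hn2 hle

lemma summable_bound : Summable (fun k : ℤ × ℤ => 1 / (qk k) ^ 2) := by
  have hprod : Summable (fun k : ℤ × ℤ =>
      (1 / (2 * (k.1 : ℝ) + 1) ^ 2) * (1 / (1 + (2 * (k.2 : ℝ)) ^ 2))) := by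
    refine summable_f1.mul_of_nonneg summable_f2 ?_ ?_
    · intro m; positivity
    · intro n; positivity
  refine Summable.of_nonneg_of_le (fun k => by positivity) (fun k => ?_) hprod
  set u := (2 * (k.1 : ℝ) + 1) ^ 2 with hu
  set v := (2 * (k.2 : ℝ)) ^ 2 with hv
  have hu1 : (1 : ℝ) ≤ u := by
    have h0 : 2 * k.1 + 1 ≠ 0 := by omega
    have h1 : (1 : ℤ) ≤ (2 * k.1 + 1) ^ 2 := by
      rcases lt_or_gt_of_ne h0 with h | h <;> nlinarith
    rw [hu]
    exact_mod_cast h1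
  have hv0 : (0 : ℝ) ≤ v := sq_nonneg _
  have hq : qk k = u + v := rfl
  have hkey : u * (1 + v) ≤ (qk k) ^ 2 := by rw [hq]; nlinarith
  have hpos : (0 : ℝ) < u * (1 + v) := by positivity
  calc 1 / (qk k) ^ 2 ≤ 1 / (u * (1 + v)) := one_div_le_one_div_of_le hpos hkey
    _ = 1 / u * (1 / (1 + v)) := by rw [one_div_mul_one_div]

lemma summable_eps {ε : ℝ} (hε : 0 ≤ ε) :
    Summable (fun k : ℤ × ℤ => 1 / (qk k + ε) ^ 2) := by
  refine Summable.of_nonneg_of_le (fun k => by positivity) (fun k => ?_) summable_bound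
  have h1 : (0 : ℝ) < (qk k) ^ 2 := pow_pos (qk_pos k) 2
  refine one_div_le_one_div_of_le h1 ?_
  have := qk_pos k
  nlinarith

/-- The sum as a function of `ε`. -/
noncomputable def gS (ε : ℝ) : ℝ := ∑' k : ℤ × ℤ, 1 / (qk k + ε) ^ 2

lemma gS_pos {ε : ℝ} (hε : 0 ≤ ε) : 0 < gS ε := by
  refine Summable.tsum_pos (summable_eps hε) (fun k => by positivity) ((0, 0) : ℤ × ℤ) ?_
  have h : (0 : ℝ) < qk (0, 0) + ε := lt_of_lt_of_le one_pos (by linarith [one_le_qk ((0,0) : ℤ × ℤ)])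
  exact one_div_pos.2 (pow_pos h 2)

lemma S1_eq : S1 = gS 0 := by
  unfold S1 gS qk
  simp

lemma S1_pos : 0 < S1 := by
  rw [S1_eq]; exact gS_pos le_rfl

lemma tendsto_gS : Tendsto gS (nhdsWithin 0 (Set.Ioi 0)) (nhds S1) := by
  rw [S1_eq]
  unfold gS
  refine tendsto_tsum_of_dominated_convergence (f := fun ε (k : ℤ × ℤ) => 1 / (qk k + ε) ^ 2)
    (bound := fun k => 1 / (qk k) ^ 2) summable_bound (fun k => ?_) ?_
  · have hc : ContinuousAt (fun ε : ℝ => 1 / (qk k + ε) ^ 2) 0 := by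
      have hne : (qk k + 0) ^ 2 ≠ 0 :=
        (pow_pos (by linarith [qk_pos k] : (0:ℝ) < qk k + 0) 2).ne'
      exact ContinuousAt.div continuousAt_const
        (((continuousAt_const.add continuousAt_id)).pow 2) hne
    have := hc.tendsto.mono_left (nhdsWithin_le_nhds (s := Set.Ioi (0:ℝ)))
    simpa using this
  · filter_upwards [self_mem_nhdsWithin] with ε (hε : ε ∈ Set.Ioi 0) k
    have hεpos : 0 < ε := hε
    have hq := qk_pos k
    rw [Real.norm_eq_abs, abs_of_nonneg (by positivity)]
    refine one_div_le_one_div_of_le (pow_pos (qk_pos k) 2) ?_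
    nlinarith

end SpdeAux

open SpdeAux in
/-- As `Δ → 0⁺`, the ratio of the SPDE-approximated spectral density to the true
aliased Matérn spectral density at frequency `(1/(2Δ), 0)` in dimension 2 with
ν = 1 converges to `π⁴/(16 S₁)` (numerically ≈ 2.69). -/
theorem spde_over_matern_nyquist_ratio_d2 (α : ℝ) (hα : 0 < α) :
    Tendsto
      (fun Δ : ℝ =>
        (4 * π * α ^ 2 * Δ ^ 4 / (4 + α ^ 2 * Δ ^ 2) ^ 2) /
          (4 * π * α ^ 2 * ∑' k : ℤ × ℤ,
            1 / (α ^ 2 + 4 * π ^ 2 * (1 / (2 * Δ) + (k.1 : ℝ) / Δ) ^ 2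
                + 4 * π ^ 2 * ((0 : ℝ) + (k.2 : ℝ) / Δ) ^ 2) ^ 2))
      (nhdsWithin 0 (Set.Ioi 0)) (nhds (π ^ 4 / (16 * S1))) := by
  have hπ : (0 : ℝ) < π := Real.pi_pos
  have hS1 := S1_pos
  -- the epsilon map
  have hε : Tendsto (fun Δ : ℝ => α ^ 2 * Δ ^ 2 / π ^ 2)
      (nhdsWithin 0 (Set.Ioi 0)) (nhdsWithin 0 (Set.Ioi 0)) := by
    rw [tendsto_nhdsWithin_iff]
    constructor
    · have hc : ContinuousAt (fun Δ : ℝ => α ^ 2 * Δ ^ 2 / π ^ 2) 0 := by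
        fun_prop (disch := positivity)
      have := hc.tendsto.mono_left (nhdsWithin_le_nhds (s := Set.Ioi (0:ℝ)))
      simpa using this
    · filter_upwards [self_mem_nhdsWithin] with Δ (hΔ : Δ ∈ Set.Ioi 0)
      have : (0 : ℝ) < Δ := hΔ
      exact Set.mem_Ioi.2 (by positivity)
  have hden : Tendsto (fun Δ : ℝ => (4 + α ^ 2 * Δ ^ 2) ^ 2 * gS (α ^ 2 * Δ ^ 2 / π ^ 2))
      (nhdsWithin 0 (Set.Ioi 0)) (nhds (16 * S1)) := by
    have h1 : Tendsto (fun Δ : ℝ => (4 + α ^ 2 * Δ ^ 2) ^ 2)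
        (nhdsWithin 0 (Set.Ioi 0)) (nhds 16) := by
      have hc : ContinuousAt (fun Δ : ℝ => (4 + α ^ 2 * Δ ^ 2) ^ 2) 0 := by fun_prop
      have := hc.tendsto.mono_left (nhdsWithin_le_nhds (s := Set.Ioi (0:ℝ)))
      norm_num at this
      convert this using 2
    exact h1.mul (tendsto_gS.comp hε)
  have hmain : Tendsto (fun Δ : ℝ =>
      π ^ 4 / ((4 + α ^ 2 * Δ ^ 2) ^ 2 * gS (α ^ 2 * Δ ^ 2 / π ^ 2)))
      (nhdsWithin 0 (Set.Ioi 0)) (nhds (π ^ 4 / (16 * S1))) := by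
    exact tendsto_const_nhds.div hden (by positivity)
  refine hmain.congr' ?_
  filter_upwards [self_mem_nhdsWithin] with Δ (hΔ : Δ ∈ Set.Ioi 0)
  have hΔ0 : (0 : ℝ) < Δ := hΔ
  set ε := α ^ 2 * Δ ^ 2 / π ^ 2 with hεdef
  have hε0 : 0 ≤ ε := by positivity
  -- rewrite the tsum
  have hterm : ∀ k : ℤ × ℤ,
      1 / (α ^ 2 + 4 * π ^ 2 * (1 / (2 * Δ) + (k.1 : ℝ) / Δ) ^ 2
          + 4 * π ^ 2 * ((0 : ℝ) + (k.2 : ℝ) / Δ) ^ 2) ^ 2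
        = Δ ^ 4 / π ^ 4 * (1 / (qk k + ε) ^ 2) := by
    intro k
    have hA : α ^ 2 + 4 * π ^ 2 * (1 / (2 * Δ) + (k.1 : ℝ) / Δ) ^ 2
        + 4 * π ^ 2 * ((0 : ℝ) + (k.2 : ℝ) / Δ) ^ 2
        = π ^ 2 / Δ ^ 2 * (qk k + ε) := by
      unfold qk
      rw [hεdef]
      field_simp
      ring
    have hApos : 0 < qk k + ε := by linarith [qk_pos k]
    rw [hA]
    field_simp
  have htsum : (∑' k : ℤ × ℤ,
      1 / (α ^ 2 + 4 * π ^ 2 * (1 / (2 * Δ) + (k.1 : ℝ) / Δ) ^ 2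
          + 4 * π ^ 2 * ((0 : ℝ) + (k.2 : ℝ) / Δ) ^ 2) ^ 2)
      = Δ ^ 4 / π ^ 4 * gS ε := by
    rw [tsum_congr hterm, tsum_mul_left]
    rfl
  rw [htsum]
  have hg := gS_pos hε0
  have h4 : (0 : ℝ) < 4 + α ^ 2 * Δ ^ 2 := by positivity
  field_simp
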